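/- Let P be a p-subgroup of a finite group G with P ≤ O_p(G). If P is τ-quasinormal in G, then P is S-quasinormal in G; conversely, every S-quasinormal p-subgroup of G is contained in O_p(G) and is τ-quasinormal in G. -/

import Mathlib

open scoped Pointwise

/-- `H` is S-quasinormal in `G` if it permutes with every Sylow subgroup of `G`. -/
def SQuasinormal (G : Type*) [Group G] (H : Subgroup G) : Prop :=
  ∀ (p : ℕ), p.Prime → ∀ P : Sylow p G,
    (H : Set G) * ((P : Subgroup G) : Set G) = ((P : Subgroup G) : Set G) * (H : Set G)

/-- `H` is τ-quasinormal in `G` if it permutes with every Sylow `q`-subgroup `Q` of `G`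
such that `q ∤ |H|` and `gcd(|H|, |Q^G|) ≠ 1`. -/
def TauQuasinormal (G : Type*) [Group G] (H : Subgroup G) : Prop :=
  ∀ (q : ℕ), q.Prime → ∀ Q : Sylow q G,
    ¬ q ∣ Nat.card H →
    Nat.gcd (Nat.card H) (Nat.card (Subgroup.normalClosure ((Q : Subgroup G) : Set G))) ≠ 1 →
    (H : Set G) * ((Q : Subgroup G) : Set G) = ((Q : Subgroup G) : Set G) * (H : Set G)

/-- `O_p(G)`: the largest normal `p`-subgroup of `G`. -/
def pCore' (p : ℕ) (G : Type*) [Group G] : Subgroup G :=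
  ⨆ (N : Subgroup G) (_ : N.Normal) (_ : IsPGroup p N), N

section Aux

variable {G : Type*} [Group G]

/-- If `H ≤ K` then `H * K = K` as sets. -/
lemma aux_coe_mul_eq_right {H K : Subgroup G} (h : H ≤ K) :
    (H : Set G) * (K : Set G) = (K : Set G) := by
  apply subset_antisymm
  · rintro _ ⟨a, ha, b, hb, rfl⟩
    exact K.mul_mem (h ha) hb
  · intro x hx
    exact ⟨1, H.one_mem, x, hx, one_mul x⟩

/-- If `H ≤ K` then `K * H = K` as sets. -/
lemma aux_coe_mul_eq_left {H K : Subgroup G} (h : H ≤ K) :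
    (K : Set G) * (H : Set G) = (K : Set G) := by
  apply subset_antisymm
  · rintro _ ⟨a, ha, b, hb, rfl⟩
    exact K.mul_mem ha (h hb)
  · intro x hx
    exact ⟨x, hx, 1, H.one_mem, mul_one x⟩

/-- Elementwise commuting subgroups have commuting set products. -/
lemma aux_coe_mul_comm {H K : Subgroup G} (h : ∀ x ∈ H, ∀ y ∈ K, x * y = y * x) :
    (H : Set G) * (K : Set G) = (K : Set G) * (H : Set G) := by
  ext z
  constructor <;> rintro ⟨a, ha, b, hb, rfl⟩
  · exact ⟨b, hb, a, ha, (h a ha b hb).symm⟩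
  · exact ⟨b, hb, a, ha, h b hb a ha⟩

/-- If the set products of `H` and `K` commute, the product equals the join. -/
lemma aux_sup_coe_eq_mul {H K : Subgroup G} (h : (H : Set G) * K = (K : Set G) * H) :
    ((H ⊔ K : Subgroup G) : Set G) = (H : Set G) * (K : Set G) := by
  let T : Subgroup G :=
    { carrier := (H : Set G) * (K : Set G)
      one_mem' := ⟨1, H.one_mem, 1, K.one_mem, one_mul 1⟩
      mul_mem' := by
        rintro a b ⟨h₁, hh₁, k₁, hk₁, rfl⟩ ⟨h₂, hh₂, k₂, hk₂, rfl⟩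
        have : k₁ * h₂ ∈ (H : Set G) * (K : Set G) := by
          rw [h]; exact ⟨k₁, hk₁, h₂, hh₂, rfl⟩
        obtain ⟨h₃, hh₃, k₃, hk₃, hEq⟩ := this
        refine ⟨h₁ * h₃, H.mul_mem hh₁ hh₃, k₃ * k₂, K.mul_mem hk₃ hk₂, ?_⟩
        have hEq' : h₃ * k₃ = k₁ * h₂ := hEq
        calc h₁ * h₃ * (k₃ * k₂) = h₁ * (h₃ * k₃) * k₂ := by group
          _ = h₁ * (k₁ * h₂) * k₂ := by rw [hEq']
          _ = h₁ * k₁ * (h₂ * k₂) := by group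
      inv_mem' := by
        rintro a ⟨h₁, hh₁, k₁, hk₁, rfl⟩
        have : k₁⁻¹ * h₁⁻¹ ∈ (K : Set G) * (H : Set G) :=
          ⟨k₁⁻¹, K.inv_mem hk₁, h₁⁻¹, H.inv_mem hh₁, rfl⟩
        rw [← h] at this
        simpa [mul_inv_rev] using this }
  have hHT : H ≤ T := fun x hx => ⟨x, hx, 1, K.one_mem, mul_one x⟩
  have hKT : K ≤ T := fun x hx => ⟨1, H.one_mem, x, hx, one_mul x⟩
  apply subset_antisymm
  · exact (sup_le hHT hKT : H ⊔ K ≤ T)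
  · rintro _ ⟨a, ha, b, hb, rfl⟩
    exact Subgroup.mul_mem _ (Subgroup.mem_sup_left ha) (Subgroup.mem_sup_right hb)

variable [Finite G] {p : ℕ} [Fact p.Prime]

/-- A normal `p`-subgroup is contained in every Sylow `p`-subgroup. -/
lemma aux_normal_pgroup_le_sylow {N : Subgroup G} (hN : IsPGroup p N) (hnorm : N.Normal)
    (S : Sylow p G) : N ≤ S := by
  obtain ⟨R, hR⟩ := hN.exists_le_sylow
  obtain ⟨g, rfl⟩ := MulAction.exists_smul_eq G R S
  have h1 : MulAut.conj g • N ≤ MulAut.conj g • (R : Subgroup G) :=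
    Subgroup.pointwise_smul_le_pointwise_smul_iff.mpr hR
  rw [Subgroup.Normal.conj_smul_eq_self] at h1
  exact h1

/-- The intersection of all Sylow `p`-subgroups is normal. -/
lemma aux_iInf_sylow_normal : (⨅ S : Sylow p G, (S : Subgroup G)).Normal := by
  constructor
  intro x hx g
  simp only [Subgroup.mem_iInf] at hx ⊢
  intro S
  have hx' := hx (g⁻¹ • S)
  rw [Sylow.coe_subgroup_smul, Subgroup.mem_pointwise_smul_iff_inv_smul_mem] at hx'
  simpa using hx'

/-- The intersection of all Sylow `p`-subgroups is a `p`-group. -/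
lemma aux_iInf_sylow_pgroup : IsPGroup p (↥(⨅ S : Sylow p G, (S : Subgroup G))) := by
  obtain ⟨S⟩ := (inferInstance : Nonempty (Sylow p G))
  exact IsPGroup.to_le S.2 (iInf_le _ S)

lemma aux_pCore'_le_sylow (S : Sylow p G) : pCore' p G ≤ S :=
  iSup_le fun N => iSup_le fun hnorm => iSup_le fun hN =>
    aux_normal_pgroup_le_sylow hN hnorm S

lemma aux_le_pCore' {N : Subgroup G} (hnorm : N.Normal) (hN : IsPGroup p N) :
    N ≤ pCore' p G :=
  le_iSup_of_le N <| le_iSup_of_le hnorm <| le_iSup_of_le hN le_rfl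

lemma aux_pCore'_le_iInf : pCore' p G ≤ ⨅ S : Sylow p G, (S : Subgroup G) :=
  le_iInf fun S => aux_pCore'_le_sylow S

/-- A `p`-subgroup whose set product with a Sylow `p`-subgroup commutes is contained in it. -/
lemma aux_le_sylow_of_mul_comm {P : Subgroup G} (hP : IsPGroup p P) (S : Sylow p G)
    (h : (P : Set G) * ((S : Subgroup G) : Set G) = ((S : Subgroup G) : Set G) * P) :
    P ≤ S := by
  set T : Subgroup G := P ⊔ S with hT
  have hset : (T : Set G) = (P : Set G) * ((S : Subgroup G) : Set G) := aux_sup_coe_eq_mul h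
  -- compute the cardinality of T
  have hcard : Nat.card T =
      Nat.card (S : Subgroup G) *
        Nat.card (((P : Set G)).image ((↑) : G → G ⧸ (S : Subgroup G)) :
          Set (G ⧸ (S : Subgroup G))) := by
    have := Subgroup.card_mul_eq_card_subgroup_mul_card_quotient (S : Subgroup G) (P : Set G)
    rw [← this, ← hset]
    simp
  -- the image is the orbit of the trivial coset under P
  have himage : ((P : Set G)).image ((↑) : G → G ⧸ (S : Subgroup G)) =
      MulAction.orbit P ((1 : G) : G ⧸ (S : Subgroup G)) := by
    ext q
    constructor
    · rintro ⟨g, hg, rfl⟩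
      refine ⟨⟨g, hg⟩, ?_⟩
      show (g : G) • ((1 : G) : G ⧸ (S : Subgroup G)) = _
      rw [MulAction.Quotient.smul_mk]
      simp
    · rintro ⟨⟨g, hg⟩, rfl⟩
      refine ⟨g, hg, ?_⟩
      show _ = (g : G) • ((1 : G) : G ⧸ (S : Subgroup G))
      rw [MulAction.Quotient.smul_mk]
      simp
  have hdvd : Nat.card (((P : Set G)).image ((↑) : G → G ⧸ (S : Subgroup G)) :
      Set (G ⧸ (S : Subgroup G))) ∣ Nat.card P := by
    rw [himage,
      Nat.card_congr (MulAction.orbitEquivQuotientStabilizer P ((1 : G) : G ⧸ (S : Subgroup G)))]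
    exact Subgroup.card_quotient_dvd_card _
  -- T is a p-group
  obtain ⟨n, hn⟩ := IsPGroup.iff_card.mp hP
  obtain ⟨m, hm⟩ := IsPGroup.iff_card.mp S.2
  obtain ⟨d, hd⟩ := hdvd
  have hdpow : ∃ j, Nat.card (((P : Set G)).image ((↑) : G → G ⧸ (S : Subgroup G)) :
      Set (G ⧸ (S : Subgroup G))) = p ^ j := by
    have : Nat.card (((P : Set G)).image ((↑) : G → G ⧸ (S : Subgroup G)) :
        Set (G ⧸ (S : Subgroup G))) ∣ p ^ n := hn ▸ ⟨d, hd⟩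
    obtain ⟨j, _, hj⟩ := (Nat.dvd_prime_pow (Fact.out : p.Prime)).mp this
    exact ⟨j, hj⟩
  obtain ⟨j, hj⟩ := hdpow
  have hTp : IsPGroup p T := by
    rw [IsPGroup.iff_card]
    exact ⟨m + j, by rw [hcard, hm, hj, pow_add]⟩
  have : T = S := S.3 hTp le_sup_right
  rw [← this]
  exact le_sup_left

end Aux

/-- A `p`-subgroup `P ≤ O_p(G)` is S-quasinormal iff it is τ-quasinormal; moreover every
S-quasinormal `p`-subgroup lies in `O_p(G)`. -/
theorem sQuasinormal_iff_tau_of_pSubgroup {G : Type*} [Group G] [Finite G] (p : ℕ)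
    (hp : p.Prime) (P : Subgroup G) (hP : IsPGroup p P) :
    (P ≤ pCore' p G ∧ TauQuasinormal G P → SQuasinormal G P) ∧
      (SQuasinormal G P → P ≤ pCore' p G ∧ TauQuasinormal G P) := by
  haveI : Fact p.Prime := ⟨hp⟩
  constructor
  · rintro ⟨hle, htau⟩ q hq Q
    haveI : Fact q.Prime := ⟨hq⟩
    by_cases hpq : q = p
    · subst hpq
      have hPQ : P ≤ (Q : Subgroup G) := hle.trans (aux_pCore'_le_sylow Q)
      rw [aux_coe_mul_eq_right hPQ, aux_coe_mul_eq_left hPQ]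
    · have hqP : ¬ q ∣ Nat.card P := by
        obtain ⟨n, hn⟩ := IsPGroup.iff_card.mp hP
        rw [hn]
        intro hdvd
        exact hpq ((Nat.prime_dvd_prime_iff_eq hq hp).mp (hq.dvd_of_dvd_pow hdvd))
      by_cases hgcd : Nat.gcd (Nat.card P)
          (Nat.card (Subgroup.normalClosure ((Q : Subgroup G) : Set G))) = 1
      · -- gcd is 1 : either P is trivial, or p does not divide |Q^G| and Q centralizes P
        by_cases hPbot : P = ⊥
        · subst hPbot
          simp
        · set N := Subgroup.normalClosure ((Q : Subgroup G) : Set G) with hN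
          have hpN : ¬ p ∣ Nat.card N := by
            intro hdvd
            obtain ⟨n, hn⟩ := IsPGroup.iff_card.mp hP
            have hn0 : n ≠ 0 := by
              rintro rfl
              exact hPbot (Subgroup.card_eq_one.mp (by simpa using hn))
            have hpP : p ∣ Nat.card P := by
              rw [hn]; exact dvd_pow_self p hn0
            have : p ∣ Nat.gcd (Nat.card P) (Nat.card N) := Nat.dvd_gcd hpP hdvd
            rw [hgcd] at this
            exact hp.one_lt.ne' (Nat.dvd_one.mp this)
          set K := ⨅ S : Sylow p G, (S : Subgroup G) with hK
          have hKnorm : K.Normal := aux_iInf_sylow_normal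
          have hKp : IsPGroup p K := aux_iInf_sylow_pgroup
          have hdisj : Disjoint K N := by
            rw [disjoint_iff]
            by_contra hne
            have hle' : K ⊓ N ≤ N := inf_le_right
            have hpKN : IsPGroup p (K ⊓ N : Subgroup G) := IsPGroup.to_le hKp inf_le_left
            obtain ⟨m, hm⟩ := IsPGroup.iff_card.mp hpKN
            have hm0 : m ≠ 0 := by
              rintro rfl
              exact hne (Subgroup.card_eq_one.mp (by simpa using hm))
            have : p ∣ Nat.card N := by
              refine dvd_trans ?_ (Subgroup.card_dvd_of_le hle')
              rw [hm]; exact dvd_pow_self p hm0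
            exact hpN this
          have hcomm := Subgroup.commute_of_normal_of_disjoint K N hKnorm
            (Subgroup.normalClosure_normal) hdisj
          have hPK : P ≤ K := hle.trans aux_pCore'_le_iInf
          have hQN : ((Q : Subgroup G) : Set G) ⊆ (N : Set G) :=
            Subgroup.subset_normalClosure
          exact aux_coe_mul_comm fun x hx y hy => hcomm x y (hPK hx) (hQN hy)
      · exact htau q hq Q hqP hgcd
  · intro hS
    constructor
    · have hPle : ∀ S : Sylow p G, P ≤ S := fun S =>
        aux_le_sylow_of_mul_comm hP S (hS p hp S)
      have h1 : P ≤ ⨅ S : Sylow p G, (S : Subgroup G) := le_iInf hPle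
      exact h1.trans (aux_le_pCore' aux_iInf_sylow_normal aux_iInf_sylow_pgroup)
    · intro q hq Q _ _
      exact hS q hq Q
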